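/- For any commutative ring R, any n ≥ 1, vectors u, v ∈ R^n, and a formal power series f(t) = Σ_{M≥0} f_M t^M ∈ R[[t]], the determinant of the n×n matrix with (i,j) entry f(t·u_i·v_j) (as a formal power series in t) equals V(u)·V(v) · Σ_{M≥0} t^{M + C(n,2)} Σ_{m ⊢ M, m a partition with at most n parts} s_m(u)·s_m(v)·∏_{i=1}^n f_{m_i + n - i}, where V(u) = ∏_{i<j}(u_j − u_i) is the Vandermonde product and s_m is the Schur polynomial. -/

import Mathlib

open scoped Classical

open Finset Equiv

private lemma sum_val_eq (n : ℕ) : ∑ i : Fin n, (i : ℕ) = n.choose 2 := by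
  rw [Fin.sum_univ_eq_sum_range (fun k => k) n, Finset.sum_range_id, Nat.choose_two_right]

private lemma sum_rev_eq (n : ℕ) : ∑ i : Fin n, (n - 1 - (i : ℕ)) = n.choose 2 := by
  rw [← sum_val_eq n, ← Equiv.sum_comp Fin.revPerm (fun i : Fin n => (i : ℕ))]
  exact Finset.sum_congr rfl fun i _ => by simp [Fin.val_rev]; omega

private lemma sm_add {n : ℕ} {f : Fin n → ℕ} (hf : StrictMono f) :
    ∀ (k : ℕ) (i j : Fin n), (j : ℕ) = (i : ℕ) + k → f i + k ≤ f j := by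
  intro k
  induction k with
  | zero =>
    intro i j h
    have : i = j := Fin.ext (by omega)
    simp [this]
  | succ k ih =>
    intro i j h
    have hj' : (i : ℕ) + k < n := by have := j.isLt; omega
    have h1 := ih i ⟨(i : ℕ) + k, hj'⟩ rfl
    have h2 : f ⟨(i : ℕ) + k, hj'⟩ < f j := hf (by simp [Fin.lt_def]; omega)
    omega

private lemma sm_id_le {n : ℕ} {f : Fin n → ℕ} (hf : StrictMono f) (i : Fin n) :
    (i : ℕ) ≤ f i := by
  have := sm_add hf (i : ℕ) ⟨0, i.pos⟩ i (by simp)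
  omega

private lemma back1 {n : ℕ} {g : Fin n → ℕ} (hinj : Function.Injective g) :
    StrictMono (g ∘ Tuple.sort g) :=
  (Tuple.monotone_sort g).strictMono_of_injective (hinj.comp (Equiv.injective _))

private lemma back2 {n : ℕ} {g : Fin n → ℕ} (hinj : Function.Injective g) (i : Fin n) :
    (n - 1 - (i : ℕ)) ≤ g (Tuple.sort g (Fin.revPerm i)) := by
  have h := sm_id_le (back1 hinj) (Fin.revPerm i)
  simp [Fin.val_rev] at h ⊢; omega

private lemma back_sum {n : ℕ} {g : Fin n → ℕ} :
    ∑ i : Fin n, g (Tuple.sort g (Fin.revPerm i)) = ∑ i, g i := by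
  have := Equiv.sum_comp (Fin.revPerm.trans (Tuple.sort g)) g
  simpa [Equiv.trans_apply] using this

private lemma back_sum' {n : ℕ} {g : Fin n → ℕ} {M : ℕ} (hinj : Function.Injective g)
    (hsum : ∑ i, g i = M + n.choose 2) :
    ∑ i : Fin n, (g (Tuple.sort g (Fin.revPerm i)) - (n - 1 - (i : ℕ))) = M := by
  have h1 : ∑ i : Fin n, ((g (Tuple.sort g (Fin.revPerm i)) - (n - 1 - (i : ℕ))) + (n - 1 - (i : ℕ)))
      = ∑ i : Fin n, g (Tuple.sort g (Fin.revPerm i)) :=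
    Finset.sum_congr rfl fun i _ => Nat.sub_add_cancel (back2 hinj i)
  rw [Finset.sum_add_distrib, back_sum, hsum, sum_rev_eq] at h1
  omega

private lemma strictAnti_E {n M : ℕ} (m : Fin n → Fin (M + 1))
    (hm : Antitone (fun i => (m i : ℕ))) :
    StrictAnti (fun i : Fin n => (m i : ℕ) + (n - 1 - (i : ℕ))) := by
  intro i j hij
  have h1 : (m j : ℕ) ≤ (m i : ℕ) := hm hij.le
  have h2 : (i : ℕ) < (j : ℕ) := hij
  have h3 := j.isLt
  simp only
  omega

private lemma bij_sum {R : Type*} [CommRing R] (n : ℕ) (u v : Fin n → R) (fc : ℕ → R) (M : ℕ) :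
    ∑ p ∈ (Finset.univ.filter (fun m : Fin n → Fin (M + 1) =>
          Antitone (fun i => (m i : ℕ)) ∧ (∑ i, (m i : ℕ)) = M)) ×ˢ
          (Finset.univ : Finset (Equiv.Perm (Fin n))),
      (Equiv.Perm.sign p.2 : ℤ) •
        ((∏ i : Fin n, fc ((p.1 i : ℕ) + (n - 1 - (i : ℕ)))) *
         Matrix.det (Matrix.of fun i j : Fin n => u j ^ ((p.1 i : ℕ) + (n - 1 - (i : ℕ)))) *
         ∏ j : Fin n, v j ^ ((p.1 (p.2 j) : ℕ) + (n - 1 - ((p.2 j : Fin n) : ℕ))))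
    = ∑ g ∈ (Finset.Nat.antidiagonalTuple n (M + n.choose 2)).filter
        (fun g => Function.Injective g),
      (∏ j : Fin n, (fc (g j) * v j ^ g j)) *
        Matrix.det (Matrix.of fun k j : Fin n => u k ^ g j) := by
  classical
  refine Finset.sum_nbij'
    (fun p => fun j => (p.1 (p.2 j) : ℕ) + (n - 1 - ((p.2 j : Fin n) : ℕ)))
    (fun g => (fun i => (⟨(g (Tuple.sort g (Fin.revPerm i)) - (n - 1 - (i : ℕ))) % (M + 1),
        Nat.mod_lt _ M.succ_pos⟩ : Fin (M + 1)),
      ((Tuple.sort g)⁻¹).trans Fin.revPerm))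
    ?_ ?_ ?_ ?_ ?_
  · rintro ⟨m, σ⟩ hp
    simp only [Finset.mem_product, Finset.mem_filter, Finset.mem_univ, true_and, and_true] at hp
    obtain ⟨hm, hsum⟩ := hp
    simp only [Finset.mem_filter, Finset.Nat.mem_antidiagonalTuple]
    refine ⟨?_, ?_⟩
    · rw [Equiv.sum_comp σ (fun i : Fin n => (m i : ℕ) + (n - 1 - (i : ℕ)))]
      rw [Finset.sum_add_distrib, hsum, sum_rev_eq]
    · exact ((strictAnti_E m hm).injective).comp σ.injective
  · intro g hg
    simp only [Finset.mem_filter, Finset.Nat.mem_antidiagonalTuple] at hg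
    obtain ⟨hsum, hinj⟩ := hg
    simp only [Finset.mem_product, Finset.mem_filter, Finset.mem_univ, true_and, and_true]
    have hle : ∀ i : Fin n, g (Tuple.sort g (Fin.revPerm i)) - (n - 1 - (i : ℕ)) ≤ M := by
      intro i
      have := Finset.single_le_sum
        (f := fun i : Fin n => g (Tuple.sort g (Fin.revPerm i)) - (n - 1 - (i : ℕ)))
        (fun i _ => Nat.zero_le _) (Finset.mem_univ i)
      rw [back_sum' hinj hsum] at this
      exact this
    constructor
    · intro i j hij
      simp only [Nat.mod_eq_of_lt (Nat.lt_succ_of_le (hle _))]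
      have hs := back1 hinj
      rcases eq_or_lt_of_le hij with rfl | hij'
      · exact le_refl _
      have hkey : g (Tuple.sort g (Fin.revPerm j)) + ((j : ℕ) - (i : ℕ))
          ≤ g (Tuple.sort g (Fin.revPerm i)) := by
        have := sm_add hs ((j : ℕ) - (i : ℕ)) (Fin.revPerm j) (Fin.revPerm i)
          (by simp only [Fin.revPerm_apply, Fin.val_rev]; have := j.isLt; omega)
        simpa using this
      have hi2 := back2 hinj i
      have hj2 := back2 hinj j
      have := j.isLt
      have h2 : (i : ℕ) < (j : ℕ) := hij'
      omega
    · rw [Finset.sum_congr rfl (fun i _ => Nat.mod_eq_of_lt (Nat.lt_succ_of_le (hle i)))]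
      exact back_sum' hinj hsum
  · rintro ⟨m, σ⟩ hp
    simp only [Finset.mem_product, Finset.mem_filter, Finset.mem_univ, true_and, and_true] at hp
    obtain ⟨hm, hsum⟩ := hp
    set g : Fin n → ℕ := fun j => (m (σ j) : ℕ) + (n - 1 - ((σ j : Fin n) : ℕ)) with hgdef
    have hmono : StrictMono (g ∘ (Fin.revPerm.trans σ⁻¹)) := by
      intro a b hab
      have h1 : Fin.rev b < Fin.rev a := Fin.rev_lt_rev.mpr hab
      have h2 := strictAnti_E m hm h1
      simpa [hgdef, Equiv.trans_apply, Equiv.Perm.inv_def, Equiv.apply_symm_apply] using h2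
    have hτ : Fin.revPerm.trans σ⁻¹ = Tuple.sort g := by
      rw [Tuple.eq_sort_iff]
      exact ⟨hmono.monotone, fun i j hij heq => absurd heq (ne_of_lt (hmono hij))⟩
    refine Prod.ext ?_ ?_
    · funext i
      apply Fin.ext
      simp only [← hτ, Equiv.trans_apply, Fin.revPerm_apply, Fin.rev_rev,
        Equiv.Perm.inv_def, Equiv.apply_symm_apply, Nat.add_sub_cancel]
      simp only [hgdef, Equiv.Perm.inv_def, Equiv.apply_symm_apply, Nat.add_sub_cancel]
      exact Nat.mod_eq_of_lt (m i).isLt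
    · show (Equiv.trans (Tuple.sort g)⁻¹ Fin.revPerm) = σ
      rw [← hτ]
      ext x
      simp [Equiv.Perm.inv_def, Equiv.symm_trans_apply, Fin.rev_rev]
  · intro g hg
    simp only [Finset.mem_filter, Finset.Nat.mem_antidiagonalTuple] at hg
    obtain ⟨hsum, hinj⟩ := hg
    have hle : ∀ i : Fin n, g (Tuple.sort g (Fin.revPerm i)) - (n - 1 - (i : ℕ)) ≤ M := by
      intro i
      have := Finset.single_le_sum
        (f := fun i : Fin n => g (Tuple.sort g (Fin.revPerm i)) - (n - 1 - (i : ℕ)))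
        (fun i _ => Nat.zero_le _) (Finset.mem_univ i)
      rw [back_sum' hinj hsum] at this
      exact this
    funext x
    have hb := hle (Fin.rev ((Tuple.sort g)⁻¹ x))
    have hb2 := back2 hinj (Fin.rev ((Tuple.sort g)⁻¹ x))
    simp only [Fin.revPerm_apply, Fin.rev_rev, Equiv.Perm.inv_def, Equiv.apply_symm_apply] at hb hb2
    simp only [Equiv.trans_apply, Fin.revPerm_apply, Fin.rev_rev, Equiv.Perm.inv_def, Equiv.apply_symm_apply]
    rw [Nat.mod_eq_of_lt (Nat.lt_succ_of_le hb)]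
    omega
  · rintro ⟨m, σ⟩ hp
    simp only
    rw [Finset.prod_mul_distrib]
    rw [Equiv.prod_comp σ (fun j : Fin n => fc ((m j : ℕ) + (n - 1 - (j : ℕ))))]
    have hdet : Matrix.det (Matrix.of fun k j : Fin n =>
        u k ^ ((m (σ j) : ℕ) + (n - 1 - ((σ j : Fin n) : ℕ))))
        = (Equiv.Perm.sign σ : ℤ) *
          Matrix.det (Matrix.of fun i j : Fin n => u j ^ ((m i : ℕ) + (n - 1 - (i : ℕ)))) := by
      have h1 : (Matrix.of fun k j : Fin n =>
          u k ^ ((m (σ j) : ℕ) + (n - 1 - ((σ j : Fin n) : ℕ))))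
          = (Matrix.of fun k j : Fin n => u k ^ ((m j : ℕ) + (n - 1 - (j : ℕ)))).submatrix id σ := by
        ext k j; rfl
      have h2 : Matrix.det (Matrix.of fun k j : Fin n => u k ^ ((m j : ℕ) + (n - 1 - (j : ℕ))))
          = Matrix.det (Matrix.of fun i j : Fin n => u j ^ ((m i : ℕ) + (n - 1 - (i : ℕ)))) := by
        rw [← Matrix.det_transpose (Matrix.of fun i j : Fin n =>
          u j ^ ((m i : ℕ) + (n - 1 - (i : ℕ))))]
        rfl
      rw [h1, Matrix.det_permute' σ, h2]
    rw [hdet]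
    simp only [zsmul_eq_mul]
    ring

private lemma inj_sum_ge {n : ℕ} {g : Fin n → ℕ} (hinj : Function.Injective g) :
    n.choose 2 ≤ ∑ i, g i := by
  have hs : StrictMono (g ∘ Tuple.sort g) :=
    (Tuple.monotone_sort g).strictMono_of_injective (hinj.comp (Equiv.injective _))
  rw [← Equiv.sum_comp (Tuple.sort g) g]
  calc n.choose 2 = ∑ i : Fin n, (i : ℕ) := (sum_val_eq n).symm
    _ ≤ ∑ i, g (Tuple.sort g i) := Finset.sum_le_sum fun i _ => sm_id_le hs i

private lemma part1 {R : Type*} [CommRing R] (n : ℕ) (u v : Fin n → R) (fc : ℕ → R)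
    {k : ℕ} (hk : k < n.choose 2) :
    ∑ g ∈ Finset.Nat.antidiagonalTuple n k,
      (∏ j : Fin n, (fc (g j) * v j ^ g j)) *
        Matrix.det (Matrix.of fun k j : Fin n => u k ^ g j) = 0 := by
  refine Finset.sum_eq_zero fun g hg => ?_
  rw [Finset.Nat.mem_antidiagonalTuple] at hg
  by_cases hinj : Function.Injective g
  · exact absurd (inj_sum_ge hinj) (by omega)
  · have hz : Matrix.det (Matrix.of fun k j : Fin n => u k ^ g j) = 0 := by
      obtain ⟨a, b, hab, hne⟩ := Function.not_injective_iff.mp hinj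
      exact Matrix.det_zero_of_column_eq hne (fun r => by simp [hab])
    rw [hz, mul_zero]


private lemma coeff_det {R : Type*} [CommRing R] (n : ℕ) (u v : Fin n → R) (fc : ℕ → R) (N : ℕ) :
    (PowerSeries.coeff (R := R) N) (Matrix.det (Matrix.of fun i j : Fin n =>
        PowerSeries.mk fun M => fc M * (u i * v j) ^ M)) =
    ∑ g ∈ Finset.Nat.antidiagonalTuple n N,
      (∏ j : Fin n, (fc (g j) * v j ^ g j)) *
        Matrix.det (Matrix.of fun k j : Fin n => u k ^ g j) := by
  classical
  rw [Matrix.det_apply, map_sum]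
  have key : ∀ σ : Equiv.Perm (Fin n),
      (PowerSeries.coeff (R := R) N) ((Equiv.Perm.sign σ) • ∏ j : Fin n,
          (Matrix.of fun i j : Fin n => PowerSeries.mk fun M => fc M * (u i * v j) ^ M) (σ j) j)
      = ∑ l ∈ Finset.finsuppAntidiag (Finset.univ : Finset (Fin n)) N,
          (Equiv.Perm.sign σ : ℤ) • ∏ j : Fin n, (fc (l j) * (u (σ j) * v j) ^ (l j)) := by
    intro σ
    rw [Units.smul_def, map_zsmul, PowerSeries.coeff_prod, Finset.smul_sum]
    refine Finset.sum_congr rfl fun l _ => ?_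
    congr 1
    exact Finset.prod_congr rfl fun j _ => by simp [PowerSeries.coeff_mk]
  rw [Finset.sum_congr rfl fun σ _ => key σ]
  rw [Finset.sum_comm]
  have step2 : ∀ l : Fin n →₀ ℕ,
      ∑ σ : Equiv.Perm (Fin n), (Equiv.Perm.sign σ : ℤ) •
          ∏ j : Fin n, (fc (l j) * (u (σ j) * v j) ^ (l j))
      = (∏ j : Fin n, (fc (l j) * v j ^ (l j))) *
          Matrix.det (Matrix.of fun k j : Fin n => u k ^ (l j)) := by
    intro l
    rw [Matrix.det_apply, Finset.mul_sum]
    refine Finset.sum_congr rfl fun σ _ => ?_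
    rw [Units.smul_def, zsmul_eq_mul, zsmul_eq_mul, ← mul_assoc,
      mul_comm (∏ j : Fin n, (fc (l j) * v j ^ (l j))) _, mul_assoc]
    congr 1
    rw [← Finset.prod_mul_distrib]
    refine Finset.prod_congr rfl fun j _ => ?_
    simp only [Matrix.of_apply]
    ring
  rw [Finset.sum_congr rfl fun l _ => step2 l]
  refine Finset.sum_nbij' (fun l => ⇑l) (fun g => Finsupp.equivFunOnFinite.symm g)
    ?_ ?_ ?_ ?_ ?_
  · intro l hl
    simp only [Finset.mem_finsuppAntidiag] at hl
    simp [Finset.Nat.mem_antidiagonalTuple, ← hl.1]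
  · intro g hg
    simp only [Finset.Nat.mem_antidiagonalTuple] at hg
    simp only [Finset.mem_finsuppAntidiag]
    constructor
    · rw [← hg]; exact Finset.sum_congr rfl fun i _ => rfl
    · exact Finset.subset_univ _
  · intro l _; exact Finsupp.equivFunOnFinite.symm_apply_apply l
  · intro g _; rfl
  · intro l _; rfl

private lemma part2 {R : Type*} [CommRing R] (n : ℕ) (u v : Fin n → R) (fc : ℕ → R) (M : ℕ) :
    ∑ g ∈ Finset.Nat.antidiagonalTuple n (M + n.choose 2),
      (∏ j : Fin n, (fc (g j) * v j ^ g j)) *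
        Matrix.det (Matrix.of fun k j : Fin n => u k ^ g j)
    = ∑ m ∈ Finset.univ.filter (fun m : Fin n → Fin (M + 1) =>
          Antitone (fun i => (m i : ℕ)) ∧ (∑ i, (m i : ℕ)) = M),
        (∏ i : Fin n, fc ((m i : ℕ) + (n - 1 - (i : ℕ)))) *
        Matrix.det (Matrix.of fun i j : Fin n => u j ^ ((m i : ℕ) + (n - 1 - (i : ℕ)))) *
        Matrix.det (Matrix.of fun i j : Fin n => v j ^ ((m i : ℕ) + (n - 1 - (i : ℕ)))) := by
  classical
  rw [← Finset.sum_filter_of_ne (p := fun g : Fin n → ℕ => Function.Injective g)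
    (fun g _ hne => by
      by_contra hinj
      obtain ⟨a, b, hab, hne'⟩ := Function.not_injective_iff.mp hinj
      exact hne (by
        rw [Matrix.det_zero_of_column_eq hne'
          (fun r => by simp [hab] : ∀ r, (Matrix.of fun k j : Fin n => u k ^ g j) r a
            = (Matrix.of fun k j : Fin n => u k ^ g j) r b), mul_zero]))]
  rw [← bij_sum n u v fc M, Finset.sum_product]
  refine Finset.sum_congr rfl fun m _ => ?_
  rw [Matrix.det_apply (Matrix.of fun i j : Fin n => v j ^ ((m i : ℕ) + (n - 1 - (i : ℕ)))),
    Finset.mul_sum]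
  refine Finset.sum_congr rfl fun σ _ => ?_
  rw [Units.smul_def, zsmul_eq_mul, zsmul_eq_mul]
  simp only [Matrix.of_apply]
  ring


/-- Khare's determinantal identity: for a formal power series `f(t) = ∑ f_M t^M` over a
commutative ring `R` and vectors `u, v ∈ R^n`,
`det f[t u vᵀ] = V(u) V(v) ∑_{M ≥ 0} t^{M + C(n,2)} ∑_{m ⊢ M} s_m(u) s_m(v) ∏_i f_{m_i + n - i}`,
stated coefficient-wise, with `V(u) s_m(u) = det (u_j^{m_i + n - i})` (Cauchy's definition
of the Schur polynomial), so each summand `V(u) V(v) s_m(u) s_m(v)` is the product of the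
two generalized Vandermonde determinants. -/
theorem stmt0 (R : Type*) [CommRing R] (n : ℕ) (hn : 1 ≤ n)
    (u v : Fin n → R) (fc : ℕ → R) :
    (∀ k : ℕ, k < n.choose 2 →
      (PowerSeries.coeff (R := R) k)
        (Matrix.det (Matrix.of fun i j : Fin n =>
          PowerSeries.mk fun M => fc M * (u i * v j) ^ M)) = 0) ∧
    (∀ M : ℕ,
      (PowerSeries.coeff (R := R) (M + n.choose 2))
        (Matrix.det (Matrix.of fun i j : Fin n =>
          PowerSeries.mk fun M' => fc M' * (u i * v j) ^ M')) =
      ∑ m : Fin n → Fin (M + 1),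
        if Antitone (fun i => (m i : ℕ)) ∧ (∑ i, (m i : ℕ)) = M then
          (∏ i : Fin n, fc ((m i : ℕ) + (n - 1 - (i : ℕ)))) *
          Matrix.det (Matrix.of fun i j : Fin n => u j ^ ((m i : ℕ) + (n - 1 - (i : ℕ)))) *
          Matrix.det (Matrix.of fun i j : Fin n => v j ^ ((m i : ℕ) + (n - 1 - (i : ℕ))))
        else 0) := by
  constructor
  · intro k hk
    rw [coeff_det]
    exact part1 n u v fc hk
  · intro M
    rw [coeff_det, part2, Finset.sum_filter]
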